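/- Let m = 2k be an even positive integer. Then for every n, the Toeplitz graph on vertex set {1,…,n}, where distinct i < j are adjacent if and only if (j−i) mod 2k ∉ {k, 0}, is word-representable. -/

import Mathlib

/-- Two letters `x` and `y` alternate in the word `w` if, after deleting all
letters other than `x` and `y`, consecutive letters always differ
(i.e. the restriction has the form `xyxy⋯` or `yxyx⋯`). -/
def Alternates {V : Type*} [DecidableEq V] (w : List V) (x y : V) : Prop :=
  (w.filter (fun z => z = x || z = y)).Chain' (· ≠ ·)

/-- A word `w` represents the graph `G`: every vertex occurs in `w`, and two
distinct letters alternate in `w` iff they are adjacent in `G`. -/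
def Represents {V : Type*} [DecidableEq V] (w : List V) (G : SimpleGraph V) : Prop :=
  (∀ v, v ∈ w) ∧ ∀ x y : V, x ≠ y → (Alternates w x y ↔ G.Adj x y)

/-- A graph is word-representable if some word represents it. -/
def WordRepresentable {V : Type*} [DecidableEq V] (G : SimpleGraph V) : Prop :=
  ∃ w : List V, Represents w G

/-- A nodup list whose members are exactly `{x, y}` is `[x,y]` or `[y,x]`. -/
lemma list_pair_eq {V : Type*} : ∀ (l : List V) (x y : V), x ≠ y →
    l.Nodup → (∀ z, z ∈ l ↔ z = x ∨ z = y) → l = [x, y] ∨ l = [y, x]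
  | [], x, y, _, _, hmem => by simpa using (hmem x).2 (Or.inl rfl)
  | [a], x, y, hxy, _, hmem => by
      have hx := (hmem x).2 (Or.inl rfl)
      have hy := (hmem y).2 (Or.inr rfl)
      simp only [List.mem_singleton] at hx hy
      exact absurd (hx.trans hy.symm) hxy
  | [a, b], x, y, hxy, hnd, hmem => by
      have hx := (hmem x).2 (Or.inl rfl)
      have hy := (hmem y).2 (Or.inr rfl)
      have hab : a ≠ b := by
        simp only [List.nodup_cons, List.mem_singleton] at hnd; tauto
      simp only [List.mem_cons, List.mem_singleton, List.not_mem_nil, or_false] at hx hy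
      rcases hx with rfl | rfl <;> rcases hy with rfl | rfl <;> simp_all
  | a :: b :: c :: t, x, y, hxy, hnd, hmem => by
      have ha := (hmem a).1 (by simp)
      have hb := (hmem b).1 (by simp)
      have hc := (hmem c).1 (by simp)
      simp only [List.nodup_cons, List.mem_cons] at hnd
      rcases ha with rfl | rfl <;> rcases hb with rfl | rfl <;>
        rcases hc with rfl | rfl <;> simp_all

/-- A nodup list, pairwise-ordered by an antisymmetric relation, whose members
are exactly `{x, y}` with `r x y`, is `[x, y]`. -/
lemma sorted_pair_filter {V : Type*} {r : V → V → Prop}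
    (hanti : ∀ a b, r a b → r b a → a = b)
    (l : List V) (x y : V) (hxy : x ≠ y) (hr : r x y)
    (hnd : l.Nodup) (hs : l.Pairwise r) (hmem : ∀ z, z ∈ l ↔ z = x ∨ z = y) :
    l = [x, y] := by
  rcases list_pair_eq l x y hxy hnd hmem with h | h
  · exact h
  · subst h
    have hyx : r y x := by
      simpa using hs
    exact absurd (hanti _ _ hr hyx) hxy

lemma mod_two_k (k a b : ℕ) (hk : 0 < k) (hab : a < b) :
    ((b - a) % (2 * k) ≠ k ∧ (b - a) % (2 * k) ≠ 0) ↔ a % k ≠ b % k := by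
  have h1 : (b - a) % (2 * k) % k = (b - a) % k :=
    Nat.mod_mod_of_dvd _ ⟨2, by ring⟩
  have h2 : (b - a) % k = 0 ↔ a % k = b % k := by
    constructor
    · intro h
      obtain ⟨c, hc⟩ := Nat.dvd_of_mod_eq_zero h
      have hb : b = a + k * c := by omega
      rw [hb, Nat.add_mul_mod_self_left]
    · intro h
      exact Nat.sub_mod_eq_zero_of_mod_eq h.symm
  constructor
  · rintro ⟨hne1, hne2⟩ h
    have h3 : (b - a) % k = 0 := h2.2 h
    have h4 : k ∣ (b - a) % (2 * k) := by
      rw [Nat.dvd_iff_mod_eq_zero, h1]; exact h3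
    obtain ⟨c, hc⟩ := h4
    have h5 : (b - a) % (2 * k) < 2 * k := Nat.mod_lt _ (by omega)
    rcases c with _ | _ | c
    · exact hne2 (by omega)
    · exact hne1 (by omega)
    · exfalso
      have : 2 * k ≤ k * (c + 1 + 1) := by nlinarith
      omega
  · intro h
    have h3 : (b - a) % k ≠ 0 := fun he => h (h2.1 he)
    constructor
    · intro he; rw [he] at h1; simp at h1; exact h3 h1.symm
    · intro he; rw [he] at h1; simp at h1; exact h3 h1.symm

/-- First sorting order: by residue mod `k`, then by value. -/
def ToepLe1 (k n : ℕ) (a b : Fin n) : Prop :=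
  (a : ℕ) % k < (b : ℕ) % k ∨ ((a : ℕ) % k = (b : ℕ) % k ∧ (a : ℕ) ≤ (b : ℕ))

/-- Second sorting order: by residue mod `k`, then by reverse value. -/
def ToepLe2 (k n : ℕ) (a b : Fin n) : Prop :=
  (a : ℕ) % k < (b : ℕ) % k ∨ ((a : ℕ) % k = (b : ℕ) % k ∧ (b : ℕ) ≤ (a : ℕ))

instance (k n : ℕ) : DecidableRel (ToepLe1 k n) := fun a b => by
  unfold ToepLe1; infer_instance

instance (k n : ℕ) : DecidableRel (ToepLe2 k n) := fun a b => by
  unfold ToepLe2; infer_instance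

instance (k n : ℕ) : IsTotal (Fin n) (ToepLe1 k n) :=
  ⟨fun a b => by unfold ToepLe1; omega⟩

instance (k n : ℕ) : IsTotal (Fin n) (ToepLe2 k n) :=
  ⟨fun a b => by unfold ToepLe2; omega⟩

instance (k n : ℕ) : IsTrans (Fin n) (ToepLe1 k n) :=
  ⟨fun a b c h1 h2 => by unfold ToepLe1 at *; omega⟩

instance (k n : ℕ) : IsTrans (Fin n) (ToepLe2 k n) :=
  ⟨fun a b c h1 h2 => by unfold ToepLe2 at *; omega⟩

lemma toepLe1_antisymm (k n : ℕ) (a b : Fin n) :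
    ToepLe1 k n a b → ToepLe1 k n b a → a = b := by
  intro h1 h2; unfold ToepLe1 at *; exact Fin.ext (by omega)

lemma toepLe2_antisymm (k n : ℕ) (a b : Fin n) :
    ToepLe2 k n a b → ToepLe2 k n b a → a = b := by
  intro h1 h2; unfold ToepLe2 at *; exact Fin.ext (by omega)

/-- For m = 2k even, the Toeplitz graph G_n(1^(k-1) 0 1^k), where i < j are
adjacent iff (j − i) % (2k) ∉ {k, 0}, is word-representable. -/
theorem toeplitz_gap_half_word_representable (k n : ℕ) (hk : 0 < k) :
    WordRepresentable (SimpleGraph.fromRel (fun i j : Fin n =>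
      (i : ℕ) < (j : ℕ) ∧ ((j : ℕ) - (i : ℕ)) % (2 * k) ≠ k ∧
        ((j : ℕ) - (i : ℕ)) % (2 * k) ≠ 0)) := by
  classical
  set A : List (Fin n) := List.insertionSort (ToepLe1 k n) (List.finRange n) with hA
  set B : List (Fin n) := List.insertionSort (ToepLe2 k n) (List.finRange n) with hB
  refine ⟨A ++ B, ?_, ?_⟩
  · intro v
    simp [hA, List.mem_finRange]
  · intro x y hxy
    set p : Fin n → Bool := fun z => z = x || z = y with hp
    have hvne : (x : ℕ) ≠ (y : ℕ) := fun h => hxy (Fin.ext h)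
    -- membership in the filtered halves
    have hmemA : ∀ z, z ∈ A.filter p ↔ z = x ∨ z = y := by
      intro z
      simp [hA, List.mem_filter, hp]
    have hmemB : ∀ z, z ∈ B.filter p ↔ z = x ∨ z = y := by
      intro z
      simp [hB, List.mem_filter, hp]
    have hndA : (A.filter p).Nodup :=
      (((List.perm_insertionSort (ToepLe1 k n) (List.finRange n)).nodup_iff).2
        (List.nodup_finRange n)).filter p
    have hndB : (B.filter p).Nodup :=
      (((List.perm_insertionSort (ToepLe2 k n) (List.finRange n)).nodup_iff).2
        (List.nodup_finRange n)).filter p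
    have hpwA : (A.filter p).Pairwise (ToepLe1 k n) :=
      List.Pairwise.sublist ((List.filter_sublist (l := A)))
        (List.pairwise_insertionSort (ToepLe1 k n) (List.finRange n))
    have hpwB : (B.filter p).Pairwise (ToepLe2 k n) :=
      List.Pairwise.sublist ((List.filter_sublist (l := B)))
        (List.pairwise_insertionSort (ToepLe2 k n) (List.finRange n))
    -- adjacency is exactly: different residues mod k
    have hadj : (SimpleGraph.fromRel (fun i j : Fin n =>
        (i : ℕ) < (j : ℕ) ∧ ((j : ℕ) - (i : ℕ)) % (2 * k) ≠ k ∧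
          ((j : ℕ) - (i : ℕ)) % (2 * k) ≠ 0)).Adj x y ↔
        (x : ℕ) % k ≠ (y : ℕ) % k := by
      rw [SimpleGraph.fromRel_adj]
      constructor
      · rintro ⟨-, ⟨hlt, h1, h2⟩ | ⟨hlt, h1, h2⟩⟩
        · exact (mod_two_k k x y hk hlt).1 ⟨h1, h2⟩
        · exact fun he => (mod_two_k k y x hk hlt).1 ⟨h1, h2⟩ he.symm
      · intro h
        refine ⟨hxy, ?_⟩
        rcases lt_or_gt_of_ne hvne with hlt | hlt
        · exact Or.inl ⟨hlt, ((mod_two_k k x y hk hlt).2 h).1,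
            ((mod_two_k k x y hk hlt).2 h).2⟩
        · exact Or.inr ⟨hlt, ((mod_two_k k y x hk hlt).2 (Ne.symm h)).1,
            ((mod_two_k k y x hk hlt).2 (Ne.symm h)).2⟩
    rw [hadj]
    show ((A ++ B).filter p).Chain' (· ≠ ·) ↔ (x : ℕ) % k ≠ (y : ℕ) % k
    rw [List.filter_append]
    rcases Nat.lt_trichotomy ((x : ℕ) % k) ((y : ℕ) % k) with hr | hr | hr
    · have hfa : A.filter p = [x, y] :=
        sorted_pair_filter (toepLe1_antisymm k n) _ x y hxy (Or.inl hr) hndA hpwA hmemA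
      have hfb : B.filter p = [x, y] :=
        sorted_pair_filter (toepLe2_antisymm k n) _ x y hxy (Or.inl hr) hndB hpwB hmemB
      rw [hfa, hfb]
      simp only [List.cons_append, List.nil_append, List.isChain_cons_cons, List.isChain_singleton,
          List.Chain',
        and_true]
      constructor
      · intro _; omega
      · intro _; exact ⟨hxy, hxy.symm, hxy⟩
    · -- same residue: not adjacent, and filtered word is x y y x (or y x x y)
      rcases lt_or_gt_of_ne hvne with hlt | hlt
      · have hfa : A.filter p = [x, y] :=
          sorted_pair_filter (toepLe1_antisymm k n) _ x y hxy
            (Or.inr ⟨hr, Nat.le_of_lt hlt⟩) hndA hpwA hmemA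
        have hfb : B.filter p = [y, x] :=
          sorted_pair_filter (toepLe2_antisymm k n) _ y x hxy.symm
            (Or.inr ⟨hr.symm, Nat.le_of_lt hlt⟩) hndB hpwB
            (fun z => (hmemB z).trans or_comm)
        rw [hfa, hfb]
        simp only [List.cons_append, List.nil_append, List.isChain_cons_cons, List.isChain_singleton,
          List.Chain',
          and_true]
        constructor
        · rintro ⟨-, h, -⟩; exact absurd rfl h
        · intro h; exact absurd hr h
      · have hfa : A.filter p = [y, x] :=
          sorted_pair_filter (toepLe1_antisymm k n) _ y x hxy.symm
            (Or.inr ⟨hr.symm, Nat.le_of_lt hlt⟩) hndA hpwA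
            (fun z => (hmemA z).trans or_comm)
        have hfb : B.filter p = [x, y] :=
          sorted_pair_filter (toepLe2_antisymm k n) _ x y hxy
            (Or.inr ⟨hr, Nat.le_of_lt hlt⟩) hndB hpwB hmemB
        rw [hfa, hfb]
        simp only [List.cons_append, List.nil_append, List.isChain_cons_cons, List.isChain_singleton,
          List.Chain',
          and_true]
        constructor
        · rintro ⟨-, h, -⟩; exact absurd rfl h
        · intro h; exact absurd hr h
    · have hfa : A.filter p = [y, x] :=
        sorted_pair_filter (toepLe1_antisymm k n) _ y x hxy.symm (Or.inl hr) hndA hpwA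
          (fun z => (hmemA z).trans or_comm)
      have hfb : B.filter p = [y, x] :=
        sorted_pair_filter (toepLe2_antisymm k n) _ y x hxy.symm (Or.inl hr) hndB hpwB
          (fun z => (hmemB z).trans or_comm)
      rw [hfa, hfb]
      simp only [List.cons_append, List.nil_append, List.isChain_cons_cons, List.isChain_singleton,
          List.Chain',
        and_true]
      constructor
      · intro _; omega
      · intro _; exact ⟨hxy.symm, hxy, hxy.symm⟩
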